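/- arXiv:2009.07169 — 2 statements merged into one kernel-verified Lean document; each statement's English description precedes it below -/
import Mathlib

section
/- Uniqueness for the vector measure-valued Skorokhod problem (VMVSP): let P be a convergent substochastic K×K matrix, R = I − Pᵀ, and (α, μ) ∈ D_M^{↑K} × D^{↑K} with μ(0) = 0. If (ξ, β, ι) and (ξ', β', ι') both satisfy, for every x ≥ 0: (1) ξ[0,x] = α[0,x] − Rβ[0,x]; (2) ∫ ξ_s^i[0,x] dβ_s^i(x,∞) = 0 for all i; (3) ∫ ξ_s^i[0,x] dι^i(s) = 0 for all i; (4) β[0,∞) + ι = μ, then ξ = ξ', β = β', ι = ι'. -/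
open MeasureTheory Set
open scoped NNReal

/-- `stieltjesZero f g` encodes `∫_{[0,∞)} f dg = 0` for a nonnegative integrand `f`
and a nondecreasing right-continuous integrator `g` on `[0,∞)` with `g(0-) = 0`. -/
def stieltjesZero (f g : ℝ → ℝ) : Prop :=
  ∃ S : StieltjesFunction ℝ, (∀ t, 0 ≤ t → S t = g t) ∧ (∀ t, t < 0 → S t = 0) ∧
    ∫⁻ t in Ici (0:ℝ), ENNReal.ofReal (f t) ∂S.measure = 0


open Filter in

lemma skorokhod_one_dim (ν : Measure ℝ) (y v z : ℝ → ℝ) (t : ℝ) (ht : 0 ≤ t)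
    (hy_mono : MonotoneOn y (Ici 0)) (hy0 : y 0 = 0)
    (hz0 : ∀ s, 0 ≤ s → 0 ≤ z s)
    (hzv : ∀ s, 0 ≤ s → z s = v s + y s)
    (hIoc : ∀ a b : ℝ, 0 ≤ a → a ≤ b → ν (Ioc a b) = ENNReal.ofReal (y b - y a))
    (hae : ν.restrict (Ici 0) {s | z s ≠ 0} = 0) :
    y t = sSup ((fun s => max 0 (-(v s))) '' Icc 0 t) := by
  set S : Set ℝ := (fun s => max 0 (-(v s))) '' Icc 0 t with hS
  have hne : S.Nonempty := ⟨_, mem_image_of_mem _ (left_mem_Icc.2 ht)⟩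
  have hyt0 : 0 ≤ y t := by
    rw [← hy0]; exact hy_mono self_mem_Ici ht ht
  have hub : ∀ a ∈ S, a ≤ y t := by
    rintro a ⟨s, hs, rfl⟩
    refine max_le hyt0 ?_
    have hzs := hz0 s hs.1
    have : -v s = y s - z s := by rw [hzv s hs.1]; ring
    rw [this]
    have : y s ≤ y t := hy_mono hs.1 ht hs.2
    linarith
  have hbdd : BddAbove S := ⟨y t, hub⟩
  have hcle : sSup S ≤ y t := csSup_le hne hub
  set c := sSup S with hc
  have hc0 : 0 ≤ c := le_trans (le_max_left _ _) (le_csSup hbdd (mem_image_of_mem _ (left_mem_Icc.2 ht)))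
  -- the set where y > c has ν-measure zero
  have hA : ν {s | s ∈ Ioc 0 t ∧ c < y s} = 0 := by
    refine measure_mono_null ?_ (by
      have := Measure.restrict_apply' (μ := ν) (t := {s | z s ≠ 0}) (measurableSet_Ici (a := (0:ℝ)))
      rw [this] at hae
      exact hae)
    rintro s ⟨hs, hcy⟩
    have hs0 : (0:ℝ) ≤ s := hs.1.le
    have hv : max 0 (-(v s)) ≤ c := le_csSup hbdd (mem_image_of_mem _ ⟨hs0, hs.2⟩)
    have : 0 < z s := by
      rw [hzv s hs0]
      have : -(v s) ≤ c := le_trans (le_max_right _ _) hv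
      linarith
    exact ⟨ne_of_gt this, hs0⟩
  have hB : ν {s | s ∈ Ioc 0 t ∧ y s ≤ c} ≤ ENNReal.ofReal c := by
    set B := {s | s ∈ Ioc 0 t ∧ y s ≤ c} with hBdef
    rcases B.eq_empty_or_nonempty with hBe | hBne
    · simp [hBe]
    have hBbd : BddAbove B := ⟨t, fun s hs => hs.1.2⟩
    set L := sSup B with hL
    have hIocLe : ∀ s ∈ B, ν (Ioc 0 s) ≤ ENNReal.ofReal c := by
      intro s hs
      rw [hIoc 0 s le_rfl hs.1.1.le, hy0, sub_zero]
      exact ENNReal.ofReal_le_ofReal hs.2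
    by_cases hLB : L ∈ B
    · refine le_trans (measure_mono ?_) (hIocLe L hLB)
      intro s hs
      exact ⟨hs.1.1, le_csSup hBbd hs⟩
    · obtain ⟨u, hu_mono, hu_tend, hu_mem⟩ := exists_seq_tendsto_sSup hBne hBbd
      have hsub : B ⊆ ⋃ n, Ioc 0 (u n) := by
        intro b hb
        have hbL : b < L := lt_of_le_of_ne (le_csSup hBbd hb) (fun h => hLB (h ▸ hb))
        obtain ⟨n, hn⟩ := (hu_tend.eventually (eventually_gt_nhds hbL)).exists
        exact mem_iUnion.2 ⟨n, hb.1.1, hn.le⟩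
      refine le_trans (measure_mono hsub) ?_
      have hmon : Monotone fun n => Ioc (0:ℝ) (u n) := fun n m hnm => Ioc_subset_Ioc le_rfl (hu_mono hnm)
      rw [Directed.measure_iUnion hmon.directed_le]
      exact iSup_le fun n => hIocLe _ (hu_mem n)
  have hsplit : Ioc (0:ℝ) t ⊆ {s | s ∈ Ioc 0 t ∧ c < y s} ∪ {s | s ∈ Ioc 0 t ∧ y s ≤ c} := by
    intro s hs
    rcases lt_or_ge c (y s) with h | h
    · exact Or.inl ⟨hs, h⟩
    · exact Or.inr ⟨hs, h⟩
  have : ENNReal.ofReal (y t) ≤ ENNReal.ofReal c := by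
    calc ENNReal.ofReal (y t) = ν (Ioc 0 t) := by rw [hIoc 0 t le_rfl ht, hy0, sub_zero]
    _ ≤ ν {s | s ∈ Ioc 0 t ∧ c < y s} + ν {s | s ∈ Ioc 0 t ∧ y s ≤ c} :=
        le_trans (measure_mono hsplit) (measure_union_le _ _)
    _ ≤ ENNReal.ofReal c := by rw [hA, zero_add]; exact hB
  have := (ENNReal.ofReal_le_ofReal_iff hc0).1 this
  linarith [hcle]


lemma oneSubT_sum {K : ℕ} (P : Matrix (Fin K) (Fin K) ℝ) (w : Fin K → ℝ) (j : Fin K) :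
    (1 - P.transpose).mulVec w j = w j - ∑ k, P k j * w k := by
  simp [Matrix.mulVec, dotProduct, Matrix.one_apply, sub_mul, Finset.sum_sub_distrib,
    Matrix.transpose_apply, Finset.sum_ite_eq]

lemma abs_csSup_sub_csSup_le {f g : ℝ → ℝ} {s : Set ℝ} (hs : s.Nonempty)
    (hf : BddAbove (f '' s)) (hg : BddAbove (g '' s)) {D : ℝ}
    (h : ∀ x ∈ s, |f x - g x| ≤ D) : |sSup (f '' s) - sSup (g '' s)| ≤ D := by
  rw [abs_sub_le_iff]
  constructor
  · rw [sub_le_iff_le_add]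
    refine csSup_le (hs.image f) ?_
    rintro a ⟨x, hx, rfl⟩
    have h1 : f x - g x ≤ D := (abs_le.1 (h x hx)).2
    have h2 : g x ≤ sSup (g '' s) := le_csSup hg (mem_image_of_mem _ hx)
    linarith
  · rw [sub_le_iff_le_add]
    refine csSup_le (hs.image g) ?_
    rintro a ⟨x, hx, rfl⟩
    have h1 : -D ≤ f x - g x := (abs_le.1 (h x hx)).1
    have h2 : f x ≤ sSup (f '' s) := le_csSup hf (mem_image_of_mem _ hx)
    linarith

open Filter in

lemma iter_bound {K : ℕ} (P : Matrix (Fin K) (Fin K) ℝ) (hPnn : ∀ i j, 0 ≤ P i j)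
    (hPconv : Tendsto (fun n : ℕ => P ^ n) atTop (nhds 0)) (M : Fin K → ℝ)
    (hM : ∀ j, M j ≤ ∑ k, P k j * M k) : ∀ j, M j ≤ 0 := by
  have hstep : ∀ n j, M j ≤ ∑ k, (P ^ n) k j * M k := by
    intro n
    induction n with
    | zero => intro j; simp [Matrix.one_apply]
    | succ n ih =>
      intro j
      calc M j ≤ ∑ k, P k j * M k := hM j
        _ ≤ ∑ k, P k j * (∑ l, (P ^ n) l k * M l) :=
            Finset.sum_le_sum fun k _ => mul_le_mul_of_nonneg_left (ih k) (hPnn k j)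
        _ = ∑ l, (P ^ (n + 1)) l j * M l := by
            simp only [Finset.mul_sum]
            rw [Finset.sum_comm]
            refine Finset.sum_congr rfl fun l _ => ?_
            simp only [pow_succ, Matrix.mul_apply, Finset.sum_mul]
            exact Finset.sum_congr rfl fun k _ => by ring
  intro j
  have hlim : Tendsto (fun n : ℕ => ∑ k, (P ^ n) k j * M k) atTop (nhds 0) := by
    have h0 : (0:ℝ) = ∑ k : Fin K, (0:ℝ) * M k := by simp
    rw [h0]
    refine tendsto_finset_sum _ fun k _ => ?_
    have hcont : Continuous fun A : Matrix (Fin K) (Fin K) ℝ => A k j :=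
      (continuous_apply j).comp (continuous_apply k)
    have := (hcont.tendsto 0).comp hPconv
    simpa using this.mul_const (M k)
  exact ge_of_tendsto' hlim (fun n => hstep n j)

noncomputable def yAux {K : ℕ} (β : Fin K → ℝ → Measure ℝ≥0) (ι : Fin K → ℝ → ℝ)
    (x : ℝ≥0) (j : Fin K) (s : ℝ) : ℝ :=
  ((β j s) (Ioi x)).toReal + ι j s

noncomputable def vAux {K : ℕ} (P : Matrix (Fin K) (Fin K) ℝ) (α : Fin K → ℝ → Measure ℝ≥0)
    (μ : ℝ → Fin K → ℝ) (β : Fin K → ℝ → Measure ℝ≥0) (ι : Fin K → ℝ → ℝ)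
    (x : ℝ≥0) (j : Fin K) (r : ℝ) : ℝ :=
  ((α j r) (Iic x)).toReal - μ r j + ∑ k, P k j * μ r k - ∑ k, P k j * yAux β ι x k r

lemma vmvsp_formula {K : ℕ} (P : Matrix (Fin K) (Fin K) ℝ)
    (α : Fin K → ℝ → Measure ℝ≥0)
    (hαfin : ∀ i t, IsFiniteMeasure (α i t)) (hαmono : ∀ i, Monotone (α i))
    (μ : ℝ → Fin K → ℝ) (hμ0 : ∀ i, μ 0 i = 0)
    (ξ β : Fin K → ℝ → Measure ℝ≥0) (ι : Fin K → ℝ → ℝ)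
    (hfin : ∀ i t, IsFiniteMeasure (ξ i t) ∧ IsFiniteMeasure (β i t))
    (hβmono : ∀ i, Monotone (β i))
    (hιnn : ∀ i t, 0 ≤ t → 0 ≤ ι i t)
    (cond1 : ∀ (x : ℝ≥0) (t : ℝ), 0 ≤ t → ∀ i,
      ((ξ i t) (Iic x)).toReal = ((α i t) (Iic x)).toReal -
        (1 - P.transpose).mulVec (fun j => ((β j t) (Iic x)).toReal) i)
    (cond2 : ∀ i (x : ℝ≥0),
      stieltjesZero (fun s => ((ξ i s) (Iic x)).toReal)
        (fun s => ((β i s) (Ioi x)).toReal))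
    (cond3 : ∀ i (x : ℝ≥0),
      stieltjesZero (fun s => ((ξ i s) (Iic x)).toReal) (fun s => ι i s))
    (cond4 : ∀ i (t : ℝ), 0 ≤ t → ((β i t) univ).toReal + ι i t = μ t i)
    (x : ℝ≥0) :
    (∀ j, MonotoneOn (yAux β ι x j) (Ici 0)) ∧
    (∀ j s, 0 ≤ s → ((β j s) (Iic x)).toReal = μ s j - yAux β ι x j s) ∧
    (∀ j r, 0 ≤ r → max 0 (-(vAux P α μ β ι x j r)) ≤ yAux β ι x j r) ∧
    (∀ j t, 0 ≤ t → yAux β ι x j t =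
      sSup ((fun r => max 0 (-(vAux P α μ β ι x j r))) '' Icc 0 t)) := by
  simp only [yAux, vAux]
  have hξfin : ∀ j s (A : Set ℝ≥0), ξ j s A ≠ ⊤ := fun j s A => by
    haveI := (hfin j s).1; exact measure_ne_top _ _
  have hβfin : ∀ j s (A : Set ℝ≥0), β j s A ≠ ⊤ := fun j s A => by
    haveI := (hfin j s).2; exact measure_ne_top _ _
  have hαfin' : ∀ j s (A : Set ℝ≥0), α j s A ≠ ⊤ := fun j s A => by
    haveI := hαfin j s; exact measure_ne_top _ _
  set y : Fin K → ℝ → ℝ := fun j s => ((β j s) (Ioi x)).toReal + ι j s with hy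
  set v : Fin K → ℝ → ℝ := fun j r => ((α j r) (Iic x)).toReal - μ r j
      + ∑ k, P k j * μ r k - ∑ k, P k j * y k r with hv
  set z : Fin K → ℝ → ℝ := fun j s => ((ξ j s) (Iic x)).toReal with hz
  -- splitting
  have h_split : ∀ j s, ((β j s) (Iic x)).toReal + ((β j s) (Ioi x)).toReal
      = ((β j s) univ).toReal := by
    intro j s
    rw [← ENNReal.toReal_add (hβfin j s _) (hβfin j s _)]
    congr 1
    rw [← measure_union (Iic_disjoint_Ioi le_rfl) measurableSet_Ioi, Iic_union_Ioi]
  -- monotonicity facts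
  have hβxm : ∀ j (A : Set ℝ≥0), Monotone fun s => ((β j s) A).toReal := by
    intro j A a b hab
    exact ENNReal.toReal_mono (hβfin j b A) (Measure.le_iff'.1 (hβmono j hab) A)
  have hαxm : ∀ j, Monotone fun s => ((α j s) (Iic x)).toReal := by
    intro j a b hab
    exact ENNReal.toReal_mono (hαfin' j b _) (Measure.le_iff'.1 (hαmono j hab) _)
  have hιmono : ∀ j, MonotoneOn (ι j) (Ici 0) := by
    intro j
    obtain ⟨S3, hS3a, -, -⟩ := cond3 j x
    intro a ha b hb hab
    have e1 : (S3 : ℝ → ℝ) a = ι j a := hS3a a ha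
    have e2 : (S3 : ℝ → ℝ) b = ι j b := hS3a b hb
    rw [← e1, ← e2]
    exact S3.mono hab
  have hy_mono : ∀ j, MonotoneOn (y j) (Ici 0) := by
    intro j a ha b hb hab
    exact add_le_add (hβxm j _ hab) (hιmono j ha hb hab)
  -- values at zero
  have hι0 : ∀ j, ι j 0 = 0 ∧ ((β j 0) univ).toReal = 0 := by
    intro j
    have h4 := cond4 j 0 le_rfl
    rw [hμ0 j] at h4
    have h1 := hιnn j 0 le_rfl
    have h2 : 0 ≤ ((β j 0) univ).toReal := ENNReal.toReal_nonneg
    constructor <;> linarith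
  have hy0 : ∀ j, y j 0 = 0 := by
    intro j
    have h1 : ((β j 0) (Ioi x)).toReal ≤ ((β j 0) univ).toReal :=
      ENNReal.toReal_mono (hβfin j 0 _) (measure_mono (subset_univ _))
    have h2 : 0 ≤ ((β j 0) (Ioi x)).toReal := ENNReal.toReal_nonneg
    have := (hι0 j).1
    have := (hι0 j).2
    simp only [hy]
    linarith
  -- Iic value via cond4
  have hBx : ∀ j s, 0 ≤ s → ((β j s) (Iic x)).toReal = μ s j - y j s := by
    intro j s hs
    have h4 := cond4 j s hs
    have hsp := h_split j s
    simp only [hy]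
    linarith
  -- z = v + y
  have hzv : ∀ j s, 0 ≤ s → z j s = v j s + y j s := by
    intro j s hs
    simp only [hz, hv]
    rw [cond1 x s hs j, oneSubT_sum]
    have e : ∀ k, ((β k s) (Iic x)).toReal = μ s k - y k s := fun k => hBx k s hs
    simp only [e, mul_sub, Finset.sum_sub_distrib]
    ring
  have hz0 : ∀ j s, 0 ≤ s → 0 ≤ z j s := fun j s _ => ENNReal.toReal_nonneg
  -- max bound
  have hmax : ∀ j r, 0 ≤ r → max 0 (-(v j r)) ≤ y j r := by
    intro j r hr
    refine max_le ?_ ?_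
    · have : 0 ≤ ι j r := hιnn j r hr
      have : (0:ℝ) ≤ ((β j r) (Ioi x)).toReal := ENNReal.toReal_nonneg
      simp only [hy]; linarith [hιnn j r hr]
    · have h := hzv j r hr
      have h0 := hz0 j r hr
      linarith
  refine ⟨hy_mono, hBx, hmax, ?_⟩
  intro j t ht
  obtain ⟨S2, hS2a, hS2b, hS2int⟩ := cond2 j x
  obtain ⟨S3, hS3a, hS3b, hS3int⟩ := cond3 j x
  set ν : Measure ℝ := S2.measure + S3.measure with hν
  have hIoc : ∀ a b : ℝ, 0 ≤ a → a ≤ b → ν (Ioc a b) = ENNReal.ofReal (y j b - y j a) := by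
    intro a b ha hab
    have hb : 0 ≤ b := ha.trans hab
    rw [hν, Measure.add_apply, StieltjesFunction.measure_Ioc, StieltjesFunction.measure_Ioc,
      ← ENNReal.ofReal_add (by linarith [S2.mono hab]) (by linarith [S3.mono hab]),
      hS2a a ha, hS2a b hb, hS3a a ha, hS3a b hb]
    congr 1
    simp only [hy]
    ring
  have hae : ν.restrict (Ici 0) {s | z j s ≠ 0} = 0 := by
    -- measurable version of z j
    set g : ℝ → ℝ := fun s => ((α j s) (Iic x)).toReal -
      (((β j s) (Iic x)).toReal - ∑ k, P k j * ((β k s) (Iic x)).toReal) with hg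
    have hgmeas : Measurable g := by
      refine ((hαxm j).measurable).sub (((hβxm j _).measurable).sub ?_)
      exact Finset.measurable_sum Finset.univ fun k _ => ((hβxm k _).measurable).const_mul _
    have hzg : ∀ s, 0 ≤ s → z j s = g s := by
      intro s hs
      simp only [hz, hg]
      rw [cond1 x s hs j, oneSubT_sum]
    have haemeas : AEMeasurable (fun s => ENNReal.ofReal (z j s)) (ν.restrict (Ici 0)) := by
      refine (hgmeas.ennreal_ofReal).aemeasurable.congr ?_
      filter_upwards [ae_restrict_mem measurableSet_Ici] with s hs
      rw [hzg s hs]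
    have hint : ∫⁻ s in Ici (0:ℝ), ENNReal.ofReal (z j s) ∂ν = 0 := by
      rw [hν, Measure.restrict_add, lintegral_add_measure]
      rw [show (fun s => ENNReal.ofReal (z j s)) =
        fun s => ENNReal.ofReal (((ξ j s) (Iic x)).toReal) from rfl]
      rw [hS2int, hS3int, add_zero]
    have haez := (lintegral_eq_zero_iff' haemeas).1 hint
    have : ∀ᵐ s ∂ν.restrict (Ici 0), z j s = 0 := by
      filter_upwards [haez] with s h1
      have h2 : z j s ≤ 0 := ENNReal.ofReal_eq_zero.1 h1
      have h3 : 0 ≤ z j s := ENNReal.toReal_nonneg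
      linarith
    exact ae_iff.1 this
  exact skorokhod_one_dim ν (y j) (v j) (z j) t ht (hy_mono j) (hy0 j) (hz0 j)
    (hzv j) hIoc hae
/-- Uniqueness for the vector measure-valued Skorokhod problem (VMVSP): for a
convergent substochastic routing matrix `P`, `R = I − Pᵀ`, data `(α, μ)` with `α`
a nondecreasing path of finite measures and `μ` nondecreasing with `μ(0) = 0`,
any two tuples `(ξ, β, ι)` and `(ξ', β', ι')` satisfying
(1) `ξ[0,x] = α[0,x] − R β[0,x]`, (2) `∫ ξ^i_s[0,x] dβ^i_s(x,∞) = 0`,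
(3) `∫ ξ^i_s[0,x] dι^i(s) = 0`, (4) `β[0,∞) + ι = μ`, coincide. -/
theorem vmvsp_uniqueness {K : ℕ}
    (P : Matrix (Fin K) (Fin K) ℝ)
    (hPnn : ∀ i j, 0 ≤ P i j) (hPsub : ∀ i, ∑ j, P i j ≤ 1)
    (hPconv : Filter.Tendsto (fun n : ℕ => P ^ n) Filter.atTop (nhds 0))
    (α : Fin K → ℝ → Measure ℝ≥0)
    (hαfin : ∀ i t, IsFiniteMeasure (α i t))
    (hαmono : ∀ i, Monotone (α i))
    (μ : ℝ → Fin K → ℝ) (hμ0 : ∀ i, μ 0 i = 0)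
    (hμmono : ∀ i, Monotone fun t => μ t i)
    (ξ ξ' β β' : Fin K → ℝ → Measure ℝ≥0) (ι ι' : Fin K → ℝ → ℝ)
    (hfin : ∀ i t, IsFiniteMeasure (ξ i t) ∧ IsFiniteMeasure (β i t) ∧
      IsFiniteMeasure (ξ' i t) ∧ IsFiniteMeasure (β' i t))
    (hβmono : ∀ i, Monotone (β i)) (hβ'mono : ∀ i, Monotone (β' i))
    (hβrc : ∀ i (x : ℝ≥0) (t : ℝ),
      ContinuousWithinAt (fun s => ((β i s) (Iic x)).toReal) (Ici t) t)
    (hβ'rc : ∀ i (x : ℝ≥0) (t : ℝ),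
      ContinuousWithinAt (fun s => ((β' i s) (Iic x)).toReal) (Ici t) t)
    (hιnn : ∀ i t, 0 ≤ t → 0 ≤ ι i t) (hι'nn : ∀ i t, 0 ≤ t → 0 ≤ ι' i t)
    (cond1 : ∀ (x : ℝ≥0) (t : ℝ), 0 ≤ t → ∀ i,
      ((ξ i t) (Iic x)).toReal = ((α i t) (Iic x)).toReal -
        (1 - P.transpose).mulVec (fun j => ((β j t) (Iic x)).toReal) i)
    (cond2 : ∀ i (x : ℝ≥0),
      stieltjesZero (fun s => ((ξ i s) (Iic x)).toReal)
        (fun s => ((β i s) (Ioi x)).toReal))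
    (cond3 : ∀ i (x : ℝ≥0),
      stieltjesZero (fun s => ((ξ i s) (Iic x)).toReal) (fun s => ι i s))
    (cond4 : ∀ i (t : ℝ), 0 ≤ t → ((β i t) univ).toReal + ι i t = μ t i)
    (cond1' : ∀ (x : ℝ≥0) (t : ℝ), 0 ≤ t → ∀ i,
      ((ξ' i t) (Iic x)).toReal = ((α i t) (Iic x)).toReal -
        (1 - P.transpose).mulVec (fun j => ((β' j t) (Iic x)).toReal) i)
    (cond2' : ∀ i (x : ℝ≥0),
      stieltjesZero (fun s => ((ξ' i s) (Iic x)).toReal)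
        (fun s => ((β' i s) (Ioi x)).toReal))
    (cond3' : ∀ i (x : ℝ≥0),
      stieltjesZero (fun s => ((ξ' i s) (Iic x)).toReal) (fun s => ι' i s))
    (cond4' : ∀ i (t : ℝ), 0 ≤ t → ((β' i t) univ).toReal + ι' i t = μ t i) :
    ∀ i (t : ℝ), 0 ≤ t → ξ i t = ξ' i t ∧ β i t = β' i t ∧ ι i t = ι' i t := by
  intro i t ht
  have hξfin : ∀ j s (A : Set ℝ≥0), ξ j s A ≠ ⊤ := fun j s A => by
    haveI := (hfin j s).1; exact measure_ne_top _ _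
  have hβfin : ∀ j s (A : Set ℝ≥0), β j s A ≠ ⊤ := fun j s A => by
    haveI := (hfin j s).2.1; exact measure_ne_top _ _
  have hξ'fin : ∀ j s (A : Set ℝ≥0), ξ' j s A ≠ ⊤ := fun j s A => by
    haveI := (hfin j s).2.2.1; exact measure_ne_top _ _
  have hβ'fin : ∀ j s (A : Set ℝ≥0), β' j s A ≠ ⊤ := fun j s A => by
    haveI := (hfin j s).2.2.2; exact measure_ne_top _ _
  have F := vmvsp_formula P α hαfin hαmono μ hμ0 ξ β ι
    (fun i t => ⟨(hfin i t).1, (hfin i t).2.1⟩) hβmono hιnn cond1 cond2 cond3 cond4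
  have F' := vmvsp_formula P α hαfin hαmono μ hμ0 ξ' β' ι'
    (fun i t => ⟨(hfin i t).2.2.1, (hfin i t).2.2.2⟩) hβ'mono hι'nn cond1' cond2' cond3' cond4'
  -- main pointwise claim at time t
  have main : ∀ (x : ℝ≥0) (j : Fin K), (β j t) (Iic x) = (β' j t) (Iic x) := by
    intro x j0
    obtain ⟨hmono, hBx, hmax, hform⟩ := F x
    obtain ⟨hmono', hBx', hmax', hform'⟩ := F' x
    have hynn : ∀ j s, 0 ≤ s → 0 ≤ yAux β ι x j s := fun j s hs =>
      add_nonneg ENNReal.toReal_nonneg (hιnn j s hs)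
    have hy'nn : ∀ j s, 0 ≤ s → 0 ≤ yAux β' ι' x j s := fun j s hs =>
      add_nonneg ENNReal.toReal_nonneg (hι'nn j s hs)
    set M : Fin K → ℝ :=
      fun j => sSup ((fun s => |yAux β ι x j s - yAux β' ι' x j s|) '' Icc 0 t) with hMdef
    have hMbdd : ∀ j, BddAbove ((fun s => |yAux β ι x j s - yAux β' ι' x j s|) '' Icc 0 t) := by
      intro j
      refine ⟨yAux β ι x j t + yAux β' ι' x j t, ?_⟩
      rintro a ⟨s, hs, rfl⟩
      have h1 : yAux β ι x j s ≤ yAux β ι x j t := hmono j hs.1 ht hs.2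
      have h2 : yAux β' ι' x j s ≤ yAux β' ι' x j t := hmono' j hs.1 ht hs.2
      have h3 := hynn j s hs.1
      have h4 := hy'nn j s hs.1
      rw [abs_le]
      constructor <;> linarith
    have hMne : ∀ j, ((fun s => |yAux β ι x j s - yAux β' ι' x j s|) '' Icc 0 t).Nonempty :=
      fun j => ⟨_, mem_image_of_mem _ (left_mem_Icc.2 ht)⟩
    have habsM : ∀ j s, s ∈ Icc 0 t → |yAux β ι x j s - yAux β' ι' x j s| ≤ M j :=
      fun j s hs => le_csSup (hMbdd j) (mem_image_of_mem _ hs)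
    have hMnn : ∀ j, 0 ≤ M j := fun j =>
      le_trans (abs_nonneg _) (habsM j 0 (left_mem_Icc.2 ht))
    have hMle : ∀ j, M j ≤ ∑ k, P k j * M k := by
      intro j
      refine csSup_le (hMne j) ?_
      rintro a ⟨s, hs, rfl⟩
      show |yAux β ι x j s - yAux β' ι' x j s| ≤ ∑ k, P k j * M k
      rw [hform j s hs.1, hform' j s hs.1]
      have hbdd1 : BddAbove ((fun r => max 0 (-(vAux P α μ β ι x j r))) '' Icc 0 s) := by
        refine ⟨yAux β ι x j s, ?_⟩
        rintro a ⟨r, hr, rfl⟩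
        exact (hmax j r hr.1).trans (hmono j hr.1 hs.1 hr.2)
      have hbdd2 : BddAbove ((fun r => max 0 (-(vAux P α μ β' ι' x j r))) '' Icc 0 s) := by
        refine ⟨yAux β' ι' x j s, ?_⟩
        rintro a ⟨r, hr, rfl⟩
        exact (hmax' j r hr.1).trans (hmono' j hr.1 hs.1 hr.2)
      refine abs_csSup_sub_csSup_le ⟨0, left_mem_Icc.2 hs.1⟩ hbdd1 hbdd2 ?_
      intro r hr
      rw [max_comm 0 (-(vAux P α μ β ι x j r)), max_comm 0 (-(vAux P α μ β' ι' x j r))]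
      refine le_trans (abs_max_sub_max_le_abs _ _ _) ?_
      have he : -(vAux P α μ β ι x j r) - -(vAux P α μ β' ι' x j r)
          = ∑ k, P k j * (yAux β ι x k r - yAux β' ι' x k r) := by
        simp only [vAux, mul_sub, Finset.sum_sub_distrib]
        ring
      rw [he]
      refine le_trans (Finset.abs_sum_le_sum_abs _ _) (Finset.sum_le_sum fun k _ => ?_)
      rw [abs_mul, abs_of_nonneg (hPnn k j)]
      exact mul_le_mul_of_nonneg_left (habsM k r ⟨hr.1, hr.2.trans hs.2⟩) (hPnn k j)
    have hM0 : ∀ j, M j = 0 := fun j =>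
      le_antisymm (iter_bound P hPnn hPconv M hMle j) (hMnn j)
    have hyeq : yAux β ι x j0 t = yAux β' ι' x j0 t := by
      have := habsM j0 t (right_mem_Icc.2 ht)
      rw [hM0 j0] at this
      have := abs_nonpos_iff.1 this
      linarith [sub_eq_zero.1 this]
    have htr : ((β j0 t) (Iic x)).toReal = ((β' j0 t) (Iic x)).toReal := by
      rw [hBx j0 t ht, hBx' j0 t ht, hyeq]
    exact (ENNReal.toReal_eq_toReal_iff' (hβfin j0 t _) (hβ'fin j0 t _)).1 htr
  have hβeq : ∀ j, β j t = β' j t := by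
    intro j
    haveI := (hfin j t).2.1
    exact Measure.ext_of_Iic (β j t) (β' j t) (fun a => main a j)
  have hιeq : ι i t = ι' i t := by
    have h4 := cond4 i t ht
    have h4' := cond4' i t ht
    rw [hβeq i] at h4
    linarith
  have hξeq : ξ i t = ξ' i t := by
    haveI := (hfin i t).1
    refine Measure.ext_of_Iic (ξ i t) (ξ' i t) (fun a => ?_)
    have h1 := cond1 a t ht i
    have h1' := cond1' a t ht i
    have hfun : (fun j => ((β j t) (Iic a)).toReal) = fun j => ((β' j t) (Iic a)).toReal :=
      funext fun j => by rw [hβeq j]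
    rw [hfun] at h1
    exact (ENNReal.toReal_eq_toReal_iff' (hξfin i t _) (hξ'fin i t _)).1 (by rw [h1, h1'])
  exact ⟨hξeq, hβeq i, hιeq⟩
end

section
/- Induction bound for served mass over a deadline interval: in the prelimit hard EDF network, for t₁ < t₂ and an interval A = [t₃, t₄) ⊂ [0,T] with t₄ ≤ t₂, Σ_{i=1}^K (β̄^{is,N}_{t₂}(A) − β̄^{is,N}_{t₁}(A)) ≤ Σ_{n=0}^{⌊t₄/ε⌋} [ Σ_{i=1}^K (ᾱ^{i,N}_{t₂}(A−nε) − ᾱ^{i,N}_{t₁}(A−nε)) + Σ_{i=1}^K ξ̄^{i,N}_{t₁}(A−nε) + K/N ]. -/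
open MeasureTheory Set Finset

/-- `A` shifted left by `c` and intersected with `[0,∞)`. -/
def shiftSet (A : Set ℝ) (c : ℝ) : Set ℝ := {x : ℝ | x + c ∈ A} ∩ Set.Ici 0

/-- Induction bound for the served mass over a deadline interval in the prelimit hard
EDF network: for `t₁ < t₂` and `A = [t₃,t₄) ⊆ [0,T]` with `t₄ ≤ t₂`,
`Σ_i (β̄^{is,N}_{t₂}(A) − β̄^{is,N}_{t₁}(A))` is bounded by the sum over
`n = 0, …, ⌊t₄/ε⌋` of shifted arrival increments, shifted initial queue contents,
and `K/N` error terms. -/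
theorem served_mass_interval_bound
    {K : ℕ} (N : ℕ) (hN : 0 < N) (ε : ℝ) (hε : 0 < ε)
    (T t₁ t₂ t₃ t₄ : ℝ) (h12 : t₁ < t₂) (h34 : t₃ ≤ t₄) (h42 : t₄ ≤ t₂)
    (hA : Set.Ico t₃ t₄ ⊆ Set.Icc 0 T)
    (β ξ αm : Fin K → ℝ → Measure ℝ) (γ : Fin K → Fin K → ℝ → Measure ℝ)
    (hfin : ∀ i t, IsFiniteMeasure (β i t) ∧ IsFiniteMeasure (ξ i t) ∧
      IsFiniteMeasure (αm i t))
    (hγfin : ∀ j i t, IsFiniteMeasure (γ j i t))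
    (hβmono : ∀ i (A' : Set ℝ), β i t₁ A' ≤ β i t₂ A')
    (hγmono : ∀ j i (A' : Set ℝ), γ j i t₁ A' ≤ γ j i t₂ A')
    (hbal : ∀ i (A' : Set ℝ), MeasurableSet A' →
      (β i t₂ A').toReal - (β i t₁ A').toReal ≤
        (αm i t₂ A').toReal - (αm i t₁ A').toReal +
        (∑ j : Fin K, ((γ j i t₂ A').toReal - (γ j i t₁ A').toReal)) +
        (ξ i t₁ A').toReal)
    (hγβ : ∀ j (A' : Set ℝ), MeasurableSet A' →
      ∑ i : Fin K, ((γ j i t₂ A').toReal - (γ j i t₁ A').toReal) ≤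
        (β j t₂ (shiftSet A' ε)).toReal - (β j t₁ (shiftSet A' ε)).toReal + 1 / N) :
    ∑ i : Fin K, ((β i t₂ (Set.Ico t₃ t₄)).toReal - (β i t₁ (Set.Ico t₃ t₄)).toReal) ≤
      ∑ n ∈ Finset.range (⌊t₄ / ε⌋₊ + 1),
        ((∑ i : Fin K, ((αm i t₂ (shiftSet (Set.Ico t₃ t₄) (n * ε))).toReal -
            (αm i t₁ (shiftSet (Set.Ico t₃ t₄) (n * ε))).toReal)) +
          (∑ i : Fin K, (ξ i t₁ (shiftSet (Set.Ico t₃ t₄) (n * ε))).toReal) +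
          K / N) := by

  classical
  set A : Set ℝ := Set.Ico t₃ t₄ with hAdef
  -- measurability of shifts
  have hmeas : ∀ (A' : Set ℝ), MeasurableSet A' → ∀ c : ℝ, MeasurableSet (shiftSet A' c) := by
    intro A' hA' c
    exact ((measurable_add_const c) hA').inter measurableSet_Ici
  -- composition of shifts
  have hcomp : ∀ c : ℝ, 0 ≤ c → shiftSet (shiftSet A c) ε = shiftSet A (c + ε) := by
    intro c hc
    ext x
    simp only [shiftSet, Set.mem_inter_iff, Set.mem_setOf_eq, Set.mem_Ici]
    constructor
    · rintro ⟨⟨h1, h2⟩, h3⟩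
      refine ⟨?_, h3⟩
      have hx : x + ε + c = x + (c + ε) := by ring
      rwa [hx] at h1
    · rintro ⟨h1, h3⟩
      have hx : x + ε + c = x + (c + ε) := by ring
      exact ⟨⟨by rwa [hx], by linarith⟩, h3⟩
  -- big shifts are empty
  have hempty : ∀ m : ℕ, t₄ < m * ε → shiftSet A ((m : ℝ) * ε) = ∅ := by
    intro m hm
    ext x
    simp only [shiftSet, hAdef, Set.mem_inter_iff, Set.mem_setOf_eq, Set.mem_Ici,
      Set.mem_Ico, Set.mem_empty_iff_false, iff_false]
    rintro ⟨⟨h1, h2⟩, h3⟩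
    linarith
  -- the one-step inequality
  have hstep : ∀ (A' : Set ℝ), MeasurableSet A' →
      ∑ i : Fin K, ((β i t₂ A').toReal - (β i t₁ A').toReal) ≤
        ((∑ i : Fin K, ((αm i t₂ A').toReal - (αm i t₁ A').toReal)) +
          (∑ i : Fin K, (ξ i t₁ A').toReal) + (K : ℝ) / N) +
        ∑ i : Fin K, ((β i t₂ (shiftSet A' ε)).toReal -
          (β i t₁ (shiftSet A' ε)).toReal) := by
    intro A' hA'
    have h1 : ∑ i : Fin K, ((β i t₂ A').toReal - (β i t₁ A').toReal) ≤
        ∑ i : Fin K, ((αm i t₂ A').toReal - (αm i t₁ A').toReal +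
          (∑ j : Fin K, ((γ j i t₂ A').toReal - (γ j i t₁ A').toReal)) +
          (ξ i t₁ A').toReal) :=
      Finset.sum_le_sum fun i _ => hbal i A' hA'
    have h2 : ∑ i : Fin K, ∑ j : Fin K,
        ((γ j i t₂ A').toReal - (γ j i t₁ A').toReal) ≤
        ∑ j : Fin K, ((β j t₂ (shiftSet A' ε)).toReal -
          (β j t₁ (shiftSet A' ε)).toReal + 1 / N) := by
      rw [Finset.sum_comm]
      exact Finset.sum_le_sum fun j _ => hγβ j A' hA'
    have h3 : ∑ j : Fin K, ((β j t₂ (shiftSet A' ε)).toReal -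
        (β j t₁ (shiftSet A' ε)).toReal + 1 / N) =
        (∑ j : Fin K, ((β j t₂ (shiftSet A' ε)).toReal -
          (β j t₁ (shiftSet A' ε)).toReal)) + (K : ℝ) / N := by
      rw [Finset.sum_add_distrib]
      simp [Finset.card_univ, div_eq_mul_inv, mul_comm]
    calc ∑ i : Fin K, ((β i t₂ A').toReal - (β i t₁ A').toReal)
        ≤ ∑ i : Fin K, ((αm i t₂ A').toReal - (αm i t₁ A').toReal +
            (∑ j : Fin K, ((γ j i t₂ A').toReal - (γ j i t₁ A').toReal)) +
            (ξ i t₁ A').toReal) := h1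
      _ = (∑ i : Fin K, ((αm i t₂ A').toReal - (αm i t₁ A').toReal)) +
            (∑ i : Fin K, ∑ j : Fin K,
              ((γ j i t₂ A').toReal - (γ j i t₁ A').toReal)) +
            (∑ i : Fin K, (ξ i t₁ A').toReal) := by
          rw [Finset.sum_add_distrib, Finset.sum_add_distrib]
      _ ≤ (∑ i : Fin K, ((αm i t₂ A').toReal - (αm i t₁ A').toReal)) +
            ((∑ j : Fin K, ((β j t₂ (shiftSet A' ε)).toReal -
              (β j t₁ (shiftSet A' ε)).toReal)) + (K : ℝ) / N) +
            (∑ i : Fin K, (ξ i t₁ A').toReal) := by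
          rw [← h3]; gcongr
      _ = ((∑ i : Fin K, ((αm i t₂ A').toReal - (αm i t₁ A').toReal)) +
            (∑ i : Fin K, (ξ i t₁ A').toReal) + (K : ℝ) / N) +
            ∑ i : Fin K, ((β i t₂ (shiftSet A' ε)).toReal -
              (β i t₁ (shiftSet A' ε)).toReal) := by ring
  -- the main induction
  have hAmeas : MeasurableSet A := measurableSet_Ico
  have claim : ∀ k m : ℕ, t₄ < ((m + k : ℕ) : ℝ) * ε →
      ∑ i : Fin K, ((β i t₂ (shiftSet A ((m : ℝ) * ε))).toReal -
          (β i t₁ (shiftSet A ((m : ℝ) * ε))).toReal) ≤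
        ∑ j ∈ Finset.range k,
          ((∑ i : Fin K, ((αm i t₂ (shiftSet A (((m + j : ℕ) : ℝ) * ε))).toReal -
              (αm i t₁ (shiftSet A (((m + j : ℕ) : ℝ) * ε))).toReal)) +
            (∑ i : Fin K, (ξ i t₁ (shiftSet A (((m + j : ℕ) : ℝ) * ε))).toReal) +
            (K : ℝ) / N) := by
    intro k
    induction k with
    | zero =>
      intro m hm
      rw [hempty m (by simpa using hm)]
      simp
    | succ k ih =>
      intro m hm
      have hstep' := hstep (shiftSet A ((m : ℝ) * ε)) (hmeas A hAmeas _)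
      rw [hcomp ((m : ℝ) * ε) (by positivity)] at hstep'
      have hcast : (m : ℝ) * ε + ε = (((m + 1 : ℕ) : ℝ)) * ε := by push_cast; ring
      rw [hcast] at hstep'
      have ih' := ih (m + 1) (by push_cast at hm ⊢; linarith)
      have hsum : ∑ j ∈ Finset.range (k + 1),
          ((∑ i : Fin K, ((αm i t₂ (shiftSet A (((m + j : ℕ) : ℝ) * ε))).toReal -
              (αm i t₁ (shiftSet A (((m + j : ℕ) : ℝ) * ε))).toReal)) +
            (∑ i : Fin K, (ξ i t₁ (shiftSet A (((m + j : ℕ) : ℝ) * ε))).toReal) +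
            (K : ℝ) / N) =
          ((∑ i : Fin K, ((αm i t₂ (shiftSet A ((m : ℝ) * ε))).toReal -
              (αm i t₁ (shiftSet A ((m : ℝ) * ε))).toReal)) +
            (∑ i : Fin K, (ξ i t₁ (shiftSet A ((m : ℝ) * ε))).toReal) +
            (K : ℝ) / N) +
          ∑ j ∈ Finset.range k,
            ((∑ i : Fin K, ((αm i t₂ (shiftSet A (((m + 1 + j : ℕ) : ℝ) * ε))).toReal -
                (αm i t₁ (shiftSet A (((m + 1 + j : ℕ) : ℝ) * ε))).toReal)) +
              (∑ i : Fin K, (ξ i t₁ (shiftSet A (((m + 1 + j : ℕ) : ℝ) * ε))).toReal) +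
              (K : ℝ) / N) := by
        rw [Finset.sum_range_succ']
        rw [add_comm]
        congr 1
        · apply Finset.sum_congr rfl
          intro j _
          push_cast
          ring_nf
      rw [hsum]
      calc ∑ i : Fin K, ((β i t₂ (shiftSet A ((m : ℝ) * ε))).toReal -
              (β i t₁ (shiftSet A ((m : ℝ) * ε))).toReal)
          ≤ _ := hstep'
        _ ≤ _ := add_le_add le_rfl ih'
  -- apply the claim with m = 0, k = ⌊t₄/ε⌋ + 1
  have hfloor : t₄ < (((0 + (⌊t₄ / ε⌋₊ + 1) : ℕ)) : ℝ) * ε := by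
    have h1 : t₄ / ε < (⌊t₄ / ε⌋₊ : ℝ) + 1 := Nat.lt_floor_add_one _
    have h2 : t₄ < ((⌊t₄ / ε⌋₊ : ℝ) + 1) * ε := (div_lt_iff₀ hε).mp h1
    push_cast
    simpa using h2
  have hmain := claim (⌊t₄ / ε⌋₊ + 1) 0 hfloor
  have hA0 : shiftSet A (((0 : ℕ) : ℝ) * ε) = A := by
    ext x
    simp only [shiftSet, Set.mem_inter_iff, Set.mem_setOf_eq, Set.mem_Ici,
      Nat.cast_zero, zero_mul, add_zero]
    constructor
    · rintro ⟨h1, _⟩; exact h1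
    · intro hx
      exact ⟨hx, (hA hx).1⟩
  rw [hA0] at hmain
  refine hmain.trans_eq ?_
  apply Finset.sum_congr rfl
  intro n _
  norm_num
end
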